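/- Let P and Q be d×d real orthogonal projection matrices. Then there exists an orthogonal matrix U such that Uᵀ P U and Uᵀ Q U are simultaneously block-diagonal, where each block is either 1×1 (with P and Q each having entry 0 or 1) or 2×2 of the form P-block (1/2)[[1-c,-s],[-s,1+c]] and Q-block (1/2)[[1-c,s],[s,1+c]] for some c ∈ (-1,1), s = sqrt(1-c²). (CS decomposition for a pair of projections.) -/

import Mathlib

open Matrix

noncomputable def Pblock (c : ℝ) : Matrix (Fin 2) (Fin 2) ℝ :=
  !![(1 - c) / 2, -Real.sqrt (1 - c ^ 2) / 2; -Real.sqrt (1 - c ^ 2) / 2, (1 + c) / 2]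

noncomputable def Qblock (c : ℝ) : Matrix (Fin 2) (Fin 2) ℝ :=
  !![(1 - c) / 2, Real.sqrt (1 - c ^ 2) / 2; Real.sqrt (1 - c ^ 2) / 2, (1 + c) / 2]

namespace CSAux

open Module Submodule

variable {E : Type} [NormedAddCommGroup E] [InnerProductSpace ℝ E]

local notation "⟪" x ", " y "⟫" => @inner ℝ _ _ x y

def GoodPair (p q : E →ₗ[ℝ] E) (ι₁ ι₂ : Type) [Fintype ι₁] [Fintype ι₂] : Prop :=
  ∃ (b : OrthonormalBasis (ι₁ ⊕ Fin 2 × ι₂) ℝ E) (p' q' : ι₁ → ℝ) (cs : ι₂ → ℝ),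
    (∀ i, p' i = 0 ∨ p' i = 1) ∧ (∀ i, q' i = 0 ∨ q' i = 1) ∧
    (∀ j, cs j ∈ Set.Ioo (-1 : ℝ) 1) ∧
    (∀ i, p (b (.inl i)) = p' i • b (.inl i)) ∧
    (∀ i, q (b (.inl i)) = q' i • b (.inl i)) ∧
    (∀ a j, p (b (.inr (a, j))) = ∑ a', Pblock (cs j) a' a • b (.inr (a', j))) ∧
    (∀ a j, q (b (.inr (a, j))) = ∑ a', Qblock (cs j) a' a • b (.inr (a', j)))

lemma combineONB [FiniteDimensional ℝ E] {W : Submodule ℝ E} {κ ι : Type}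
    [Fintype κ] [Fintype ι] (v : κ → E) (hv : Orthonormal ℝ v)
    (hspan : span ℝ (Set.range v) = W) (b : OrthonormalBasis ι ℝ ↥Wᗮ) :
    ∃ B : OrthonormalBasis (κ ⊕ ι) ℝ E,
      (∀ k, B (.inl k) = v k) ∧ (∀ i, B (.inr i) = (b i : E)) := by
  classical
  have hmem : ∀ k, v k ∈ W := fun k => hspan ▸ subset_span ⟨k, rfl⟩
  have horth : Orthonormal ℝ (Sum.elim v (fun i => (b i : E))) := by
    rw [orthonormal_iff_ite]
    rintro (k | i) (k' | i')
    · simpa using (orthonormal_iff_ite.mp hv) k k'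
    · simpa using Submodule.inner_right_of_mem_orthogonal (hmem k) (b i').2
    · simpa using Submodule.inner_left_of_mem_orthogonal (hmem k') (b i).2
    · have := (orthonormal_iff_ite.mp b.orthonormal) i i'
      simpa [Submodule.coe_inner] using this
  have hspan' : ⊤ ≤ span ℝ (Set.range (Sum.elim v (fun i => (b i : E)))) := by
    have hsp2 : span ℝ (Set.range (fun i => (b i : E))) = Wᗮ := by
      have h1 : Set.range (fun i => (b i : E)) = (Wᗮ).subtype '' Set.range ⇑b := by
        ext x; simp [Set.mem_image]
      rw [h1, Submodule.span_image, ← OrthonormalBasis.coe_toBasis b, Basis.span_eq,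
        Submodule.map_subtype_top]
    rw [Set.Sum.elim_range, Submodule.span_union, hspan, hsp2,
      Submodule.sup_orthogonal_of_hasOrthogonalProjection]
  exact ⟨OrthonormalBasis.mk horth hspan', fun k => by simp, fun i => by simp⟩

def eqA (ι₁ ι₂ : Type) : (Unit ⊕ (ι₁ ⊕ Fin 2 × ι₂)) ≃ ((Unit ⊕ ι₁) ⊕ Fin 2 × ι₂) where
  toFun x := match x with
    | .inl _ => .inl (.inl ())
    | .inr (.inl i) => .inl (.inr i)
    | .inr (.inr a) => .inr a
  invFun x := match x with
    | .inl (.inl _) => .inl ()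
    | .inl (.inr i) => .inr (.inl i)
    | .inr a => .inr (.inr a)
  left_inv := by rintro (_ | (_ | _)) <;> rfl
  right_inv := by rintro ((_ | _) | _) <;> rfl

def eqB (ι₁ ι₂ : Type) : (Fin 2 ⊕ (ι₁ ⊕ Fin 2 × ι₂)) ≃ (ι₁ ⊕ Fin 2 × (Unit ⊕ ι₂)) where
  toFun x := match x with
    | .inl a => .inr (a, .inl ())
    | .inr (.inl i) => .inl i
    | .inr (.inr (a, j)) => .inr (a, .inr j)
  invFun x := match x with
    | .inl i => .inr (.inl i)
    | .inr (a, .inl _) => .inl a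
    | .inr (a, .inr j) => .inr (.inr (a, j))
  left_inv := by rintro (a | (i | ⟨a, j⟩)) <;> rfl
  right_inv := by rintro (i | ⟨a, (u | j)⟩) <;> rfl

lemma caseA [FiniteDimensional ℝ E] {p q : E →ₗ[ℝ] E} (v : E) (hv : ‖v‖ = 1)
    (a₀ b₀ : ℝ) (ha : a₀ = 0 ∨ a₀ = 1) (hb : b₀ = 0 ∨ b₀ = 1)
    (hpv : p v = a₀ • v) (hqv : q v = b₀ • v)
    {ι₁ ι₂ : Type} [Fintype ι₁] [Fintype ι₂]
    (hWp : ∀ x ∈ (span ℝ {v})ᗮ, p x ∈ (span ℝ {v})ᗮ)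
    (hWq : ∀ x ∈ (span ℝ {v})ᗮ, q x ∈ (span ℝ {v})ᗮ)
    (h : GoodPair (p.restrict hWp) (q.restrict hWq) ι₁ ι₂) :
    GoodPair p q (Unit ⊕ ι₁) ι₂ := by
  classical
  obtain ⟨b, p', q', cs, h1, h2, h3, h4, h5, h6, h7⟩ := h
  have hvon : Orthonormal ℝ (fun _ : Unit => v) := by
    rw [orthonormal_iff_ite]
    intro i j
    simp [real_inner_self_eq_norm_sq, hv]
  have hspan : span ℝ (Set.range (fun _ : Unit => v)) = span ℝ {v} := by
    rw [Set.range_const]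
  obtain ⟨B, hBl, hBr⟩ := combineONB (fun _ : Unit => v) hvon hspan b
  have h4' : ∀ i, p ((b (Sum.inl i) : E)) = p' i • ((b (Sum.inl i) : E)) := fun i => by
    have := congrArg (Subtype.val) (h4 i)
    simpa using this
  have h5' : ∀ i, q ((b (Sum.inl i) : E)) = q' i • ((b (Sum.inl i) : E)) := fun i => by
    have := congrArg (Subtype.val) (h5 i)
    simpa using this
  have h6' : ∀ a j, p ((b (Sum.inr (a, j)) : E))
      = ∑ a', Pblock (cs j) a' a • ((b (Sum.inr (a', j)) : E)) := fun a j => by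
    have := congrArg (Subtype.val) (h6 a j)
    simpa using this
  have h7' : ∀ a j, q ((b (Sum.inr (a, j)) : E))
      = ∑ a', Qblock (cs j) a' a • ((b (Sum.inr (a', j)) : E)) := fun a j => by
    have := congrArg (Subtype.val) (h7 a j)
    simpa using this
  refine ⟨B.reindex (eqA ι₁ ι₂), Sum.elim (fun _ => a₀) p', Sum.elim (fun _ => b₀) q', cs,
    ?_, ?_, h3, ?_, ?_, ?_, ?_⟩
  · rintro (_ | i); exacts [ha, h1 i]
  · rintro (_ | i); exacts [hb, h2 i]
  · rintro (_ | i) <;>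
      simp only [OrthonormalBasis.reindex_apply, eqA, Equiv.coe_fn_symm_mk, Sum.elim_inl,
        Sum.elim_inr]
    · rw [hBl]; exact hpv
    · rw [hBr]; exact h4' i
  · rintro (_ | i) <;>
      simp only [OrthonormalBasis.reindex_apply, eqA, Equiv.coe_fn_symm_mk, Sum.elim_inl,
        Sum.elim_inr]
    · rw [hBl]; exact hqv
    · rw [hBr]; exact h5' i
  · intro a j
    simp only [OrthonormalBasis.reindex_apply, eqA, Equiv.coe_fn_symm_mk]
    rw [hBr]
    simp only [hBr]
    exact h6' a j
  · intro a j
    simp only [OrthonormalBasis.reindex_apply, eqA, Equiv.coe_fn_symm_mk]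
    rw [hBr]
    simp only [hBr]
    exact h7' a j

lemma caseB [FiniteDimensional ℝ E] {p q : E →ₗ[ℝ] E} (f₁ f₂ : E)
    (h11 : ⟪f₁, f₁⟫ = 1) (h22 : ⟪f₂, f₂⟫ = 1) (h12 : ⟪f₁, f₂⟫ = 0)
    (c : ℝ) (hc : c ∈ Set.Ioo (-1 : ℝ) 1)
    (hp1 : p f₁ = Pblock c 0 0 • f₁ + Pblock c 1 0 • f₂)
    (hp2 : p f₂ = Pblock c 0 1 • f₁ + Pblock c 1 1 • f₂)
    (hq1 : q f₁ = Qblock c 0 0 • f₁ + Qblock c 1 0 • f₂)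
    (hq2 : q f₂ = Qblock c 0 1 • f₁ + Qblock c 1 1 • f₂)
    {ι₁ ι₂ : Type} [Fintype ι₁] [Fintype ι₂]
    (hWp : ∀ x ∈ (span ℝ {f₁, f₂})ᗮ, p x ∈ (span ℝ {f₁, f₂})ᗮ)
    (hWq : ∀ x ∈ (span ℝ {f₁, f₂})ᗮ, q x ∈ (span ℝ {f₁, f₂})ᗮ)
    (h : GoodPair (p.restrict hWp) (q.restrict hWq) ι₁ ι₂) :
    GoodPair p q ι₁ (Unit ⊕ ι₂) := by
  classical
  obtain ⟨b, p', q', cs, h1, h2, h3, h4, h5, h6, h7⟩ := h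
  have h21 : ⟪f₂, f₁⟫ = 0 := by rw [real_inner_comm]; exact h12
  have hvon : Orthonormal ℝ ![f₁, f₂] := by
    rw [orthonormal_iff_ite]
    intro i j
    fin_cases i <;> fin_cases j <;> simp [h11, h22, h12, h21, -inner_self_eq_norm_sq_to_K]
  have hspan : span ℝ (Set.range ![f₁, f₂]) = span ℝ {f₁, f₂} := by
    congr 1
    ext x
    simp only [Set.mem_range, Fin.exists_fin_two, Set.mem_insert_iff, Set.mem_singleton_iff]
    constructor
    · rintro (rfl | rfl) <;> simp
    · rintro (rfl | rfl) <;> simp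
  obtain ⟨B, hBl, hBr⟩ := combineONB ![f₁, f₂] hvon hspan b
  have h4' : ∀ i, p ((b (Sum.inl i) : E)) = p' i • ((b (Sum.inl i) : E)) := fun i => by
    have := congrArg (Subtype.val) (h4 i)
    simpa using this
  have h5' : ∀ i, q ((b (Sum.inl i) : E)) = q' i • ((b (Sum.inl i) : E)) := fun i => by
    have := congrArg (Subtype.val) (h5 i)
    simpa using this
  have h6' : ∀ a j, p ((b (Sum.inr (a, j)) : E))
      = ∑ a', Pblock (cs j) a' a • ((b (Sum.inr (a', j)) : E)) := fun a j => by
    have := congrArg (Subtype.val) (h6 a j)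
    simpa using this
  have h7' : ∀ a j, q ((b (Sum.inr (a, j)) : E))
      = ∑ a', Qblock (cs j) a' a • ((b (Sum.inr (a', j)) : E)) := fun a j => by
    have := congrArg (Subtype.val) (h7 a j)
    simpa using this
  refine ⟨B.reindex (eqB ι₁ ι₂), p', q', Sum.elim (fun _ => c) cs,
    h1, h2, ?_, ?_, ?_, ?_, ?_⟩
  · rintro (_ | j); exacts [hc, h3 j]
  · intro i
    simp only [OrthonormalBasis.reindex_apply, eqB, Equiv.coe_fn_symm_mk]
    rw [hBr]
    exact h4' i
  · intro i
    simp only [OrthonormalBasis.reindex_apply, eqB, Equiv.coe_fn_symm_mk]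
    rw [hBr]
    exact h5' i
  · rintro a (_ | j) <;>
      simp only [OrthonormalBasis.reindex_apply, eqB, Equiv.coe_fn_symm_mk, Sum.elim_inl,
        Sum.elim_inr]
    · rw [Fin.sum_univ_two]
      simp only [hBl]
      fin_cases a
      · exact hp1
      · exact hp2
    · rw [hBr]
      simp only [hBr]
      exact h6' a j
  · rintro a (_ | j) <;>
      simp only [OrthonormalBasis.reindex_apply, eqB, Equiv.coe_fn_symm_mk, Sum.elim_inl,
        Sum.elim_inr]
    · rw [Fin.sum_univ_two]
      simp only [hBl]
      fin_cases a
      · exact hq1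
      · exact hq2
    · rw [hBr]
      simp only [hBr]
      exact h7' a j


lemma aux_sq {a b : ℝ} (ha : 0 ≤ a) (hb : 0 ≤ b) (h : a ^ 2 = b ^ 2) : a = b := by
  have h2 : (a - b) * (a + b) = 0 := by ring_nf; linarith
  rcases mul_eq_zero.mp h2 with h3 | h3
  · linarith
  · have ha0 : a = 0 := by linarith
    have hb0 : b = 0 := by linarith
    rw [ha0, hb0]

lemma orth_invariant {p : E →ₗ[ℝ] E} (hp : p.IsSymmetric) {W : Submodule ℝ E}
    (hW : ∀ x ∈ W, p x ∈ W) : ∀ x ∈ Wᗮ, p x ∈ Wᗮ := by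
  intro x hx w hw
  have := hp w x
  rw [Submodule.mem_orthogonal] at hx
  rw [← this]
  exact hx _ (hW w hw)

lemma restrict_idem {p : E →ₗ[ℝ] E} (hpp : p ∘ₗ p = p) {W : Submodule ℝ E}
    (h : ∀ x ∈ W, p x ∈ W) : (p.restrict h) ∘ₗ (p.restrict h) = p.restrict h := by
  apply LinearMap.ext
  intro x
  apply Subtype.ext
  simp only [LinearMap.comp_apply, LinearMap.restrict_coe_apply]
  simpa using DFunLike.congr_fun hpp (x : E)

lemma GoodPair.reindex {p q : E →ₗ[ℝ] E} {ι₁ ι₂ κ₁ κ₂ : Type}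
    [Fintype ι₁] [Fintype ι₂] [Fintype κ₁] [Fintype κ₂]
    (h : GoodPair p q ι₁ ι₂) (e₁ : ι₁ ≃ κ₁) (e₂ : ι₂ ≃ κ₂) : GoodPair p q κ₁ κ₂ := by
  obtain ⟨b, p', q', cs, h1, h2, h3, h4, h5, h6, h7⟩ := h
  refine ⟨b.reindex (Equiv.sumCongr e₁ (Equiv.prodCongr (Equiv.refl (Fin 2)) e₂)),
    p' ∘ e₁.symm, q' ∘ e₁.symm, cs ∘ e₂.symm,
    fun i => h1 _, fun i => h2 _, fun j => h3 _, ?_, ?_, ?_, ?_⟩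
  · intro i
    simpa using h4 (e₁.symm i)
  · intro i
    simpa using h5 (e₁.symm i)
  · intro a j
    simpa using h6 a (e₂.symm j)
  · intro a j
    simpa using h7 a (e₂.symm j)

lemma goodPair_zero (hsub : Subsingleton E) (p q : E →ₗ[ℝ] E) :
    GoodPair p q (Fin 0) (Fin 0) := by
  have h1 : Orthonormal ℝ (fun i : Fin 0 ⊕ Fin 2 × Fin 0 => (0 : E)) := by
    rw [orthonormal_iff_ite]
    intro i
    exact isEmptyElim i
  have h2 : ⊤ ≤ Submodule.span ℝ (Set.range (fun i : Fin 0 ⊕ Fin 2 × Fin 0 => (0 : E))) := by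
    intro x _
    have : x = 0 := Subsingleton.elim x 0
    rw [this]
    exact Submodule.zero_mem _
  exact ⟨OrthonormalBasis.mk h1 h2, fun i => i.elim0, fun i => i.elim0, fun i => i.elim0,
    fun i => i.elim0, fun i => i.elim0, fun i => i.elim0,
    fun i => i.elim0, fun i => i.elim0, fun a j => j.elim0, fun a j => j.elim0⟩

lemma twoDim {p q : E →ₗ[ℝ] E} (v w : E)
    (hvv : ⟪v, v⟫ = 1) (hww : ⟪w, w⟫ = 1) (hvw : ⟪v, w⟫ = 0)
    (l : ℝ) (hl0 : 0 < l) (hl1 : l < 1)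
    (hpv : p v = v) (hpw : p w = 0)
    (hqv : q v = l • v + Real.sqrt (l * (1 - l)) • w)
    (hqw : q w = Real.sqrt (l * (1 - l)) • v + (1 - l) • w) :
    ∃ (f₁ f₂ : E) (c : ℝ), ⟪f₁, f₁⟫ = 1 ∧ ⟪f₂, f₂⟫ = 1 ∧ ⟪f₁, f₂⟫ = 0 ∧
      c ∈ Set.Ioo (-1 : ℝ) 1 ∧ f₁ ∈ span ℝ {v, w} ∧ f₂ ∈ span ℝ {v, w} ∧
      (p f₁ = Pblock c 0 0 • f₁ + Pblock c 1 0 • f₂) ∧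
      (p f₂ = Pblock c 0 1 • f₁ + Pblock c 1 1 • f₂) ∧
      (q f₁ = Qblock c 0 0 • f₁ + Qblock c 1 0 • f₂) ∧
      (q f₂ = Qblock c 0 1 • f₁ + Qblock c 1 1 • f₂) := by
  have hwv : ⟪w, v⟫ = 0 := by rw [real_inner_comm]; exact hvw
  set t := Real.sqrt l with htdef
  have ht2 : t ^ 2 = l := Real.sq_sqrt hl0.le
  have ht0 : 0 < t := Real.sqrt_pos.mpr hl0
  have ht1 : t < 1 := by nlinarith
  set r := Real.sqrt (1 - l) with hrdef
  have hr2 : r ^ 2 = 1 - l := Real.sq_sqrt (by linarith)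
  have hr0 : 0 < r := Real.sqrt_pos.mpr (by linarith)
  have hs : Real.sqrt (l * (1 - l)) = t * r := by
    rw [htdef, hrdef, ← Real.sqrt_mul hl0.le]
  set A := Real.sqrt ((1 + t) / 2) with hAdef
  set B := Real.sqrt ((1 - t) / 2) with hBdef
  have hA2 : A ^ 2 = (1 + t) / 2 := Real.sq_sqrt (by linarith)
  have hB2 : B ^ 2 = (1 - t) / 2 := Real.sq_sqrt (by linarith)
  have hA0 : 0 < A := Real.sqrt_pos.mpr (by linarith)
  have hB0 : 0 < B := Real.sqrt_pos.mpr (by linarith)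
  have h1 : A ^ 2 + B ^ 2 = 1 := by rw [hA2, hB2]; ring
  have hAB : A ^ 2 - B ^ 2 = t := by rw [hA2, hB2]; ring
  have hr' : r = 2 * (A * B) := by
    refine aux_sq hr0.le (by positivity) ?_
    rw [hr2]
    linear_combination (-(4 * B ^ 2)) * hA2 - (2 * (1 + t)) * hB2 + ht2
  set c : ℝ := -t with hcdef
  have hc : c ∈ Set.Ioo (-1 : ℝ) 1 := ⟨by rw [hcdef]; linarith, by rw [hcdef]; linarith⟩
  have hsc : Real.sqrt (1 - c ^ 2) = r := by
    rw [hrdef]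
    congr 1
    rw [hcdef, ← ht2]
    ring
  have hP00 : Pblock c 0 0 = A ^ 2 := by
    simp only [Pblock, Matrix.cons_val', Matrix.cons_val_zero, Matrix.empty_val',
      Matrix.cons_val_fin_one, Matrix.of_apply]
    rw [hA2, hcdef]; ring
  have hP10 : Pblock c 1 0 = -(A * B) := by
    simp only [Pblock, Matrix.cons_val', Matrix.cons_val_zero, Matrix.cons_val_one,
      Matrix.head_cons, Matrix.empty_val', Matrix.cons_val_fin_one, Matrix.of_apply,
      Matrix.head_fin_const]
    rw [hsc, hr']; ring
  have hP01 : Pblock c 0 1 = -(A * B) := by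
    simp only [Pblock, Matrix.cons_val', Matrix.cons_val_zero, Matrix.cons_val_one,
      Matrix.head_cons, Matrix.empty_val', Matrix.cons_val_fin_one, Matrix.of_apply,
      Matrix.head_fin_const]
    rw [hsc, hr']; ring
  have hP11 : Pblock c 1 1 = B ^ 2 := by
    simp only [Pblock, Matrix.cons_val', Matrix.cons_val_zero, Matrix.cons_val_one,
      Matrix.head_cons, Matrix.empty_val', Matrix.cons_val_fin_one, Matrix.of_apply,
      Matrix.head_fin_const]
    rw [hB2, hcdef]; ring
  have hQ00 : Qblock c 0 0 = A ^ 2 := by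
    simp only [Qblock, Matrix.cons_val', Matrix.cons_val_zero, Matrix.empty_val',
      Matrix.cons_val_fin_one, Matrix.of_apply]
    rw [hA2, hcdef]; ring
  have hQ10 : Qblock c 1 0 = A * B := by
    simp only [Qblock, Matrix.cons_val', Matrix.cons_val_zero, Matrix.cons_val_one,
      Matrix.head_cons, Matrix.empty_val', Matrix.cons_val_fin_one, Matrix.of_apply,
      Matrix.head_fin_const]
    rw [hsc, hr']; ring
  have hQ01 : Qblock c 0 1 = A * B := by
    simp only [Qblock, Matrix.cons_val', Matrix.cons_val_zero, Matrix.cons_val_one,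
      Matrix.head_cons, Matrix.empty_val', Matrix.cons_val_fin_one, Matrix.of_apply,
      Matrix.head_fin_const]
    rw [hsc, hr']; ring
  have hQ11 : Qblock c 1 1 = B ^ 2 := by
    simp only [Qblock, Matrix.cons_val', Matrix.cons_val_zero, Matrix.cons_val_one,
      Matrix.head_cons, Matrix.empty_val', Matrix.cons_val_fin_one, Matrix.of_apply,
      Matrix.head_fin_const]
    rw [hB2, hcdef]; ring
  refine ⟨A • v + B • w, (-B) • v + A • w, c, ?_, ?_, ?_, hc, ?_, ?_, ?_, ?_, ?_, ?_⟩
  · simp only [inner_add_left, inner_add_right, real_inner_smul_left, real_inner_smul_right,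
      hvv, hww, hvw, hwv]
    linear_combination h1
  · simp only [inner_add_left, inner_add_right, real_inner_smul_left, real_inner_smul_right,
      hvv, hww, hvw, hwv]
    linear_combination h1
  · simp only [inner_add_left, inner_add_right, real_inner_smul_left, real_inner_smul_right,
      hvv, hww, hvw, hwv]
    ring
  · exact add_mem (smul_mem _ _ (subset_span (by simp))) (smul_mem _ _ (subset_span (by simp)))
  · exact add_mem (smul_mem _ _ (subset_span (by simp))) (smul_mem _ _ (subset_span (by simp)))
  · rw [hP00, hP10, map_add, LinearMap.map_smul, LinearMap.map_smul, hpv, hpw]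
    match_scalars
    · linear_combination (-A) * h1
    · ring
  · rw [hP01, hP11, map_add, LinearMap.map_smul, LinearMap.map_smul, hpv, hpw]
    match_scalars
    · linear_combination B * h1
    · ring
  · rw [hQ00, hQ10, map_add, LinearMap.map_smul, LinearMap.map_smul, hqv, hqw, hs, hr', ← ht2, ← hAB]
    match_scalars
    · linear_combination (A * (A ^ 2 - B ^ 2)) * h1
    · linear_combination (B * (A ^ 2 - B ^ 2 - 1)) * h1
  · rw [hQ01, hQ11, map_add, LinearMap.map_smul, LinearMap.map_smul, hqv, hqw, hs, hr', ← ht2, ← hAB]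
    match_scalars
    · linear_combination (B * (A ^ 2 - B ^ 2)) * h1
    · linear_combination (-A * (1 + A ^ 2 - B ^ 2)) * h1
lemma exists_vw [FiniteDimensional ℝ E] {p q : E →ₗ[ℝ] E}
    (hp : p.IsSymmetric) (hq : q.IsSymmetric)
    (hpp : p ∘ₗ p = p) (hqq : q ∘ₗ q = q)
    (hrank : 0 < Module.finrank ℝ E)
    (hex : ¬ ∃ v : E, ‖v‖ = 1 ∧ (p v = 0 ∨ p v = v) ∧ (q v = 0 ∨ q v = v)) :
    ∃ (v w : E) (l : ℝ), ⟪v, v⟫ = 1 ∧ ⟪w, w⟫ = 1 ∧ ⟪v, w⟫ = 0 ∧ 0 < l ∧ l < 1 ∧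
      p v = v ∧ p w = 0 ∧
      q v = l • v + Real.sqrt (l * (1 - l)) • w ∧
      q w = Real.sqrt (l * (1 - l)) • v + (1 - l) • w := by
  classical
  have hppx : ∀ x, p (p x) = p x := fun x => by
    have := DFunLike.congr_fun hpp x; simpa using this
  have hqqx : ∀ x, q (q x) = q x := fun x => by
    have := DFunLike.congr_fun hqq x; simpa using this
  haveI : Nontrivial E := Module.finrank_pos_iff.mp hrank
  have hpne : ∃ x, p x ≠ 0 := by
    by_contra h
    push_neg at h
    by_cases hqz : ∀ x, q x = 0
    · obtain ⟨x, hx⟩ := exists_ne (0 : E)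
      exact hex ⟨‖x‖⁻¹ • x, norm_smul_inv_norm hx, Or.inl (h _), Or.inl (hqz _)⟩
    · push_neg at hqz
      obtain ⟨x, hx⟩ := hqz
      refine hex ⟨‖q x‖⁻¹ • q x, norm_smul_inv_norm hx, Or.inl (h _), Or.inr ?_⟩
      rw [LinearMap.map_smul, hqqx]
  -- Phase 1: eigenvector of p∘q∘p inside range p
  obtain ⟨v, m, hv, hpv, hpqv⟩ : ∃ (v : E) (m : ℝ), ‖v‖ = 1 ∧ p v = v ∧ p (q v) = m • v := by
    obtain ⟨x₀, hx₀⟩ := hpne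
    haveI : Nontrivial ↥(LinearMap.range p) :=
      nontrivial_of_ne ⟨p x₀, ⟨x₀, rfl⟩⟩ 0 (by simp [Subtype.ext_iff, hx₀])
    have hW₀ : 0 < finrank ℝ ↥(LinearMap.range p) := Module.finrank_pos_iff.mpr inferInstance
    have hT : (p ∘ₗ (q ∘ₗ p)).IsSymmetric := by
      intro x y
      simp only [LinearMap.comp_apply]
      rw [hp, hq, hp]
    have hTinv : ∀ x ∈ LinearMap.range p, (p ∘ₗ (q ∘ₗ p)) x ∈ LinearMap.range p :=
      fun x _ => ⟨q (p x), rfl⟩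
    have hT' := hT.restrict_invariant hTinv
    set i₀ : Fin (finrank ℝ ↥(LinearMap.range p)) := ⟨0, hW₀⟩ with hi₀
    have hb := hT'.apply_eigenvectorBasis rfl i₀
    set v₀ := hT'.eigenvectorBasis rfl i₀ with hv₀def
    refine ⟨(v₀ : E), hT'.eigenvalues rfl i₀, ?_, ?_, ?_⟩
    · have := (hT'.eigenvectorBasis rfl).orthonormal.1 i₀
      exact this
    · obtain ⟨y, hy⟩ := v₀.2
      rw [← hy, hppx]
    · have h1 := congrArg Subtype.val hb
      have h2 : p (q (p (v₀ : E))) = hT'.eigenvalues rfl i₀ • (v₀ : E) := by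
        simpa using h1
      have hpv0 : p (v₀ : E) = (v₀ : E) := by
        obtain ⟨y, hy⟩ := v₀.2
        rw [← hy, hppx]
      rwa [hpv0] at h2
  have hvv : ⟪v, v⟫ = 1 := by rw [real_inner_self_eq_norm_sq, hv]; norm_num
  obtain ⟨u, hu⟩ : ∃ u : E, u = q v := ⟨_, rfl⟩
  obtain ⟨l, hl⟩ : ∃ l : ℝ, l = ⟪v, u⟫ := ⟨_, rfl⟩
  have hpu : p u = m • v := by rw [hu]; exact hpqv
  have hml : m = l := by
    have h2 : ⟪v, p u⟫ = ⟪v, u⟫ := by rw [← hp v u, hpv]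
    rw [hpu, real_inner_smul_right, hvv, mul_one] at h2
    rw [h2, hl]
  have hqu : q u = u := by rw [hu]; exact hqqx v
  have hl_eq : l = ‖u‖ ^ 2 := by
    have h3 : ⟪q v, q v⟫ = ⟪v, q (q v)⟫ := hq v (q v)
    rw [hqqx] at h3
    rw [hl, hu, ← h3, real_inner_self_eq_norm_sq]
  have hune : u ≠ 0 := fun h => hex ⟨v, hv, Or.inr hpv, Or.inl (by rw [← hu]; exact h)⟩
  have hunv : u ≠ v := fun h => hex ⟨v, hv, Or.inr hpv, Or.inr (by rw [← hu]; exact h)⟩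
  have hl0 : 0 < l := by
    have : 0 < ‖u‖ := norm_pos_iff.mpr hune
    rw [hl_eq]; positivity
  have hvu : ⟪u, v⟫ = l := by rw [real_inner_comm, ← hl]
  have hl1 : l < 1 := by
    have hsub : v - u ≠ 0 := sub_ne_zero.mpr (Ne.symm hunv)
    have h4 : ‖v - u‖ ^ 2 = 1 - l := by
      rw [norm_sub_sq_real, hv, ← hl, ← hl_eq]; ring
    have : 0 < ‖v - u‖ := norm_pos_iff.mpr hsub
    nlinarith
  obtain ⟨s₀, hs₀⟩ : ∃ s : ℝ, s = Real.sqrt (l * (1 - l)) := ⟨_, rfl⟩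
  have hs₀2 : s₀ ^ 2 = l * (1 - l) := by rw [hs₀]; exact Real.sq_sqrt (by nlinarith)
  have hs₀0 : 0 < s₀ := by rw [hs₀]; exact Real.sqrt_pos.mpr (by nlinarith)
  have hvd : ⟪v, u - l • v⟫ = 0 := by
    rw [inner_sub_right, real_inner_smul_right, hvv, ← hl]; ring
  have hd2 : ‖u - l • v‖ ^ 2 = l * (1 - l) := by
    have h5 : ‖u - l • v‖ ^ 2 = ‖u‖ ^ 2 - 2 * ⟪u, l • v⟫ + ‖l • v‖ ^ 2 :=
      norm_sub_sq_real u (l • v)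
    rw [real_inner_smul_right, hvu, norm_smul, hv] at h5
    rw [h5, ← hl_eq]
    simp only [Real.norm_eq_abs, mul_pow, sq_abs, mul_one]
    ring
  have hdd : ⟪u - l • v, u - l • v⟫ = l * (1 - l) := by
    rw [real_inner_self_eq_norm_sq, hd2]
  refine ⟨v, s₀⁻¹ • (u - l • v), l, hvv, ?_, ?_, hl0, hl1, hpv, ?_, ?_, ?_⟩
  · rw [real_inner_smul_left, real_inner_smul_right, hdd, ← hs₀2]
    field_simp
  · rw [real_inner_smul_right, hvd, mul_zero]
  · rw [LinearMap.map_smul, map_sub, LinearMap.map_smul, hpv, hpu, hml]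
    simp
  · rw [← hs₀, ← hu, smul_smul, mul_inv_cancel₀ hs₀0.ne', one_smul]
    module
  · rw [← hs₀, LinearMap.map_smul, map_sub, LinearMap.map_smul, ← hu, hqu]
    match_scalars
    · field_simp
    · field_simp
      linear_combination -hs₀2

lemma key (n : ℕ) :
    ∀ (E : Type) [NormedAddCommGroup E] [InnerProductSpace ℝ E] [FiniteDimensional ℝ E],
      Module.finrank ℝ E ≤ n →
      ∀ (p q : E →ₗ[ℝ] E), p.IsSymmetric → q.IsSymmetric →
        p ∘ₗ p = p → q ∘ₗ q = q → ∃ k₁ k₂ : ℕ, GoodPair p q (Fin k₁) (Fin k₂) := by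
  induction n with
  | zero =>
      intro E _ _ _ hr p q _ _ _ _
      have h0 : Module.finrank ℝ E = 0 := Nat.le_zero.mp hr
      exact ⟨0, 0, goodPair_zero (Module.finrank_zero_iff.mp h0) p q⟩
  | succ n ih =>
      intro E _ _ _ hr p q hp hq hpp hqq
      by_cases h0 : Module.finrank ℝ E = 0
      · exact ⟨0, 0, goodPair_zero (Module.finrank_zero_iff.mp h0) p q⟩
      have hrank : 0 < Module.finrank ℝ E := Nat.pos_of_ne_zero h0
      by_cases hex : ∃ v : E, ‖v‖ = 1 ∧ (p v = 0 ∨ p v = v) ∧ (q v = 0 ∨ q v = v)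
      · obtain ⟨v, hv, hpv, hqv⟩ := hex
        have hvne : v ≠ 0 := by
          intro h; rw [h] at hv; simp at hv
        have hWp : ∀ x ∈ Submodule.span ℝ ({v} : Set E), p x ∈ Submodule.span ℝ ({v} : Set E) := by
          intro x hx
          obtain ⟨a, rfl⟩ := Submodule.mem_span_singleton.mp hx
          rw [LinearMap.map_smul]
          rcases hpv with h | h
          · rw [h]; simp
          · rw [h]; exact Submodule.smul_mem _ _ (Submodule.mem_span_singleton_self v)
        have hWq : ∀ x ∈ Submodule.span ℝ ({v} : Set E), q x ∈ Submodule.span ℝ ({v} : Set E) := by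
          intro x hx
          obtain ⟨a, rfl⟩ := Submodule.mem_span_singleton.mp hx
          rw [LinearMap.map_smul]
          rcases hqv with h | h
          · rw [h]; simp
          · rw [h]; exact Submodule.smul_mem _ _ (Submodule.mem_span_singleton_self v)
        have hWp' := orth_invariant hp hWp
        have hWq' := orth_invariant hq hWq
        have hrk : Module.finrank ℝ ↥(Submodule.span ℝ ({v} : Set E))ᗮ ≤ n := by
          have h1 := Submodule.finrank_add_finrank_orthogonal (Submodule.span ℝ ({v} : Set E))
          have h2 : Module.finrank ℝ ↥(Submodule.span ℝ ({v} : Set E)) = 1 :=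
            finrank_span_singleton hvne
          omega
        obtain ⟨k₁, k₂, hG⟩ := ih ↥(Submodule.span ℝ ({v} : Set E))ᗮ hrk
          (p.restrict hWp') (q.restrict hWq')
          (hp.restrict_invariant hWp') (hq.restrict_invariant hWq')
          (restrict_idem hpp hWp') (restrict_idem hqq hWq')
        obtain ⟨a₀, ha₀, hpva⟩ : ∃ a₀ : ℝ, (a₀ = 0 ∨ a₀ = 1) ∧ p v = a₀ • v := by
          rcases hpv with h | h
          exacts [⟨0, Or.inl rfl, by simp [h]⟩, ⟨1, Or.inr rfl, by simp [h]⟩]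
        obtain ⟨b₀, hb₀, hqvb⟩ : ∃ b₀ : ℝ, (b₀ = 0 ∨ b₀ = 1) ∧ q v = b₀ • v := by
          rcases hqv with h | h
          exacts [⟨0, Or.inl rfl, by simp [h]⟩, ⟨1, Or.inr rfl, by simp [h]⟩]
        exact ⟨Fintype.card (Unit ⊕ Fin k₁), k₂,
          (caseA v hv a₀ b₀ ha₀ hb₀ hpva hqvb hWp' hWq' hG).reindex (Fintype.equivFin _)
            (Equiv.refl _)⟩
      · obtain ⟨v, w, l, hvv, hww, hvw, hl0, hl1, hpv, hpw, hqv, hqw⟩ :=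
          exists_vw hp hq hpp hqq hrank hex
        obtain ⟨f₁, f₂, c, h11, h22, h12, hc, _, _, hp1, hp2, hq1, hq2⟩ :=
          twoDim v w hvv hww hvw l hl0 hl1 hpv hpw hqv hqw
        have hf1ne : f₁ ≠ 0 := by
          intro h; rw [h] at h11; simp at h11
        have hf1 : f₁ ∈ Submodule.span ℝ ({f₁, f₂} : Set E) :=
          Submodule.subset_span (by simp)
        have hf2 : f₂ ∈ Submodule.span ℝ ({f₁, f₂} : Set E) :=
          Submodule.subset_span (by simp)
        have hWp : ∀ x ∈ Submodule.span ℝ ({f₁, f₂} : Set E),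
            p x ∈ Submodule.span ℝ ({f₁, f₂} : Set E) := by
          intro x hx
          have hle : Submodule.span ℝ ({f₁, f₂} : Set E)
              ≤ Submodule.comap p (Submodule.span ℝ ({f₁, f₂} : Set E)) := by
            rw [Submodule.span_le]
            intro y hy
            simp only [Set.mem_insert_iff, Set.mem_singleton_iff] at hy
            rcases hy with rfl | rfl <;> simp only [SetLike.mem_coe, Submodule.mem_comap]
            · rw [hp1]; exact add_mem (Submodule.smul_mem _ _ hf1) (Submodule.smul_mem _ _ hf2)
            · rw [hp2]; exact add_mem (Submodule.smul_mem _ _ hf1) (Submodule.smul_mem _ _ hf2)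
          exact hle hx
        have hWq : ∀ x ∈ Submodule.span ℝ ({f₁, f₂} : Set E),
            q x ∈ Submodule.span ℝ ({f₁, f₂} : Set E) := by
          intro x hx
          have hle : Submodule.span ℝ ({f₁, f₂} : Set E)
              ≤ Submodule.comap q (Submodule.span ℝ ({f₁, f₂} : Set E)) := by
            rw [Submodule.span_le]
            intro y hy
            simp only [Set.mem_insert_iff, Set.mem_singleton_iff] at hy
            rcases hy with rfl | rfl <;> simp only [SetLike.mem_coe, Submodule.mem_comap]
            · rw [hq1]; exact add_mem (Submodule.smul_mem _ _ hf1) (Submodule.smul_mem _ _ hf2)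
            · rw [hq2]; exact add_mem (Submodule.smul_mem _ _ hf1) (Submodule.smul_mem _ _ hf2)
          exact hle hx
        have hWp' := orth_invariant hp hWp
        have hWq' := orth_invariant hq hWq
        have hrk : Module.finrank ℝ ↥(Submodule.span ℝ ({f₁, f₂} : Set E))ᗮ ≤ n := by
          have h1 := Submodule.finrank_add_finrank_orthogonal (Submodule.span ℝ ({f₁, f₂} : Set E))
          haveI : Nontrivial ↥(Submodule.span ℝ ({f₁, f₂} : Set E)) :=
            nontrivial_of_ne ⟨f₁, hf1⟩ 0 (by simp [Subtype.ext_iff, hf1ne])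
          have h2 : 0 < Module.finrank ℝ ↥(Submodule.span ℝ ({f₁, f₂} : Set E)) :=
            Module.finrank_pos_iff.mpr inferInstance
          omega
        obtain ⟨k₁, k₂, hG⟩ := ih ↥(Submodule.span ℝ ({f₁, f₂} : Set E))ᗮ hrk
          (p.restrict hWp') (q.restrict hWq')
          (hp.restrict_invariant hWp') (hq.restrict_invariant hWq')
          (restrict_idem hpp hWp') (restrict_idem hqq hWq')
        exact ⟨k₁, Fintype.card (Unit ⊕ Fin k₂),
          (caseB f₁ f₂ h11 h22 h12 c hc hp1 hp2 hq1 hq2 hWp' hWq' hG).reindex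
            (Equiv.refl _) (Fintype.equivFin _)⟩

end CSAux

/-- CS decomposition for a pair of real orthogonal projections. -/
theorem stmt_19 (d : ℕ) (P Q : Matrix (Fin d) (Fin d) ℝ)
    (hPs : Pᵀ = P) (hPi : P * P = P) (hQs : Qᵀ = Q) (hQi : Q * Q = Q) :
    ∃ U ∈ Matrix.orthogonalGroup (Fin d) ℝ,
      ∃ (k₁ k₂ : ℕ) (e : (Fin k₁ ⊕ Fin 2 × Fin k₂) ≃ Fin d)
        (p q : Fin k₁ → ℝ) (cs : Fin k₂ → ℝ),
        (∀ i, p i = 0 ∨ p i = 1) ∧ (∀ i, q i = 0 ∨ q i = 1) ∧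
        (∀ i, cs i ∈ Set.Ioo (-1 : ℝ) 1) ∧
        Uᵀ * P * U =
          Matrix.reindex e e
            (Matrix.fromBlocks (Matrix.diagonal p) 0 0
              (Matrix.blockDiagonal fun i => Pblock (cs i))) ∧
        Uᵀ * Q * U =
          Matrix.reindex e e
            (Matrix.fromBlocks (Matrix.diagonal q) 0 0
              (Matrix.blockDiagonal fun i => Qblock (cs i))) := by
  classical
  have hPH : P.IsHermitian := by
    ext i j
    simp only [Matrix.conjTranspose_apply, star_trivial]
    exact (congrFun (congrFun hPs j) i).symm
  have hQH : Q.IsHermitian := by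
    ext i j
    simp only [Matrix.conjTranspose_apply, star_trivial]
    exact (congrFun (congrFun hQs j) i).symm
  have hp : (Matrix.toEuclideanLin P).IsSymmetric := Matrix.isHermitian_iff_isSymmetric.mp hPH
  have hq : (Matrix.toEuclideanLin Q).IsSymmetric := Matrix.isHermitian_iff_isSymmetric.mp hQH
  have hpi : Matrix.toEuclideanLin P ∘ₗ Matrix.toEuclideanLin P = Matrix.toEuclideanLin P := by
    apply LinearMap.ext
    intro x
    simp [Matrix.toEuclideanLin_apply, Matrix.mulVec_mulVec, hPi]
  have hqi : Matrix.toEuclideanLin Q ∘ₗ Matrix.toEuclideanLin Q = Matrix.toEuclideanLin Q := by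
    apply LinearMap.ext
    intro x
    simp [Matrix.toEuclideanLin_apply, Matrix.mulVec_mulVec, hQi]
  obtain ⟨k₁, k₂, hG⟩ := CSAux.key (Module.finrank ℝ (EuclideanSpace ℝ (Fin d)))
    (EuclideanSpace ℝ (Fin d)) le_rfl _ _ hp hq hpi hqi
  obtain ⟨b, p', q', cs, h1, h2, h3, h4, h5, h6, h7⟩ := hG
  have hcard : Fintype.card (Fin k₁ ⊕ Fin 2 × Fin k₂) = d := by
    have hb := Module.finrank_eq_card_basis b.toBasis
    rw [finrank_euclideanSpace] at hb
    simpa using hb.symm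
  set e := Fintype.equivFinOfCardEq hcard with hedef
  set U : Matrix (Fin d) (Fin d) ℝ := Matrix.of fun x j => b (e.symm j) x with hUdef
  have hUapp : ∀ x j, U x j = b (e.symm j) x := fun _ _ => rfl
  have hinner : ∀ (y z : EuclideanSpace ℝ (Fin d)),
      (inner ℝ y z : ℝ) = ∑ x, y x * z x := fun y z => by
    rw [PiLp.inner_apply]
    simp [RCLike.inner_apply]
    exact Finset.sum_congr rfl fun _ _ => mul_comm _ _
  have horm : ∀ i i', (inner ℝ (b i) (b i') : ℝ) = if i = i' then 1 else 0 :=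
    orthonormal_iff_ite.mp b.orthonormal
  have hU : U ∈ Matrix.orthogonalGroup (Fin d) ℝ := by
    rw [Matrix.mem_orthogonalGroup_iff']
    ext j j'
    have hstar : star U = Uᵀ := by
      rw [Matrix.star_eq_conjTranspose]
      ext i jj
      simp [Matrix.conjTranspose_apply]
    rw [Matrix.mul_apply]
    have : ∑ x, Uᵀ j x * U x j' = ∑ x, b (e.symm j) x * b (e.symm j') x := by
      apply Finset.sum_congr rfl
      intro x _
      rw [Matrix.transpose_apply, hUapp, hUapp]
    rw [this, ← hinner, horm, Matrix.one_apply]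
    simp [EmbeddingLike.apply_eq_iff_eq]
  refine ⟨U, hU, k₁, k₂, e, p', q', cs, h1, h2, h3, ?_, ?_⟩
  · -- P side
    have hrep : ∀ i, Matrix.toEuclideanLin P (b i)
        = ∑ i', (Matrix.fromBlocks (Matrix.diagonal p') 0 0
            (Matrix.blockDiagonal fun j => Pblock (cs j))) i' i • b i' := by
      rintro (i₀ | ⟨a, j⟩)
      · rw [Fintype.sum_sum_type]
        simp only [Matrix.fromBlocks_apply₁₁, Matrix.fromBlocks_apply₂₁, Matrix.zero_apply,
          zero_smul, Finset.sum_const_zero, add_zero, Matrix.diagonal_apply, ite_smul]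
        rw [Finset.sum_ite_eq' Finset.univ i₀ (fun i₁ => p' i₁ • b (Sum.inl i₁))]
        simp only [Finset.mem_univ, if_true]
        exact h4 i₀
      · rw [Fintype.sum_sum_type]
        simp only [Matrix.fromBlocks_apply₁₂, Matrix.fromBlocks_apply₂₂, Matrix.zero_apply,
          zero_smul, Finset.sum_const_zero, zero_add]
        rw [Fintype.sum_prod_type]
        have : ∀ a' : Fin 2, ∑ j' : Fin k₂,
            (Matrix.blockDiagonal fun j0 => Pblock (cs j0)) (a', j') (a, j) • b (Sum.inr (a', j'))
            = Pblock (cs j) a' a • b (Sum.inr (a', j)) := by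
          intro a'
          rw [Finset.sum_eq_single j]
          · simp [Matrix.blockDiagonal_apply]
          · intro j' _ hne
            simp [Matrix.blockDiagonal_apply, hne]
          · intro h; exact absurd (Finset.mem_univ j) h
        rw [Finset.sum_congr rfl (fun a' _ => this a')]
        exact h6 a j
    rw [Matrix.mul_assoc]
    ext a bb
    rw [Matrix.mul_apply]
    have hcol : ∀ x, (P * U) x bb = Matrix.toEuclideanLin P (b (e.symm bb)) x := by
      intro x
      rw [Matrix.mul_apply]
      rfl
    calc ∑ x, Uᵀ a x * (P * U) x bb
        = ∑ x, b (e.symm a) x * Matrix.toEuclideanLin P (b (e.symm bb)) x := by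
          apply Finset.sum_congr rfl
          intro x _
          rw [Matrix.transpose_apply, hUapp, hcol]
      _ = (inner ℝ (b (e.symm a)) (Matrix.toEuclideanLin P (b (e.symm bb))) : ℝ) :=
          (hinner _ _).symm
      _ = (Matrix.fromBlocks (Matrix.diagonal p') 0 0
            (Matrix.blockDiagonal fun j => Pblock (cs j))) (e.symm a) (e.symm bb) := by
          rw [hrep, inner_sum]
          simp only [real_inner_smul_right, horm]
          rw [Finset.sum_congr rfl (fun i' _ => by rw [mul_ite, mul_one, mul_zero])]
          rw [Finset.sum_ite_eq Finset.univ (e.symm a)]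
          simp
      _ = (Matrix.reindex e e (Matrix.fromBlocks (Matrix.diagonal p') 0 0
            (Matrix.blockDiagonal fun j => Pblock (cs j)))) a bb := by
          rw [Matrix.reindex_apply, Matrix.submatrix_apply]
  · -- Q side
    have hrep : ∀ i, Matrix.toEuclideanLin Q (b i)
        = ∑ i', (Matrix.fromBlocks (Matrix.diagonal q') 0 0
            (Matrix.blockDiagonal fun j => Qblock (cs j))) i' i • b i' := by
      rintro (i₀ | ⟨a, j⟩)
      · rw [Fintype.sum_sum_type]
        simp only [Matrix.fromBlocks_apply₁₁, Matrix.fromBlocks_apply₂₁, Matrix.zero_apply,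
          zero_smul, Finset.sum_const_zero, add_zero, Matrix.diagonal_apply, ite_smul]
        rw [Finset.sum_ite_eq' Finset.univ i₀ (fun i₁ => q' i₁ • b (Sum.inl i₁))]
        simp only [Finset.mem_univ, if_true]
        exact h5 i₀
      · rw [Fintype.sum_sum_type]
        simp only [Matrix.fromBlocks_apply₁₂, Matrix.fromBlocks_apply₂₂, Matrix.zero_apply,
          zero_smul, Finset.sum_const_zero, zero_add]
        rw [Fintype.sum_prod_type]
        have : ∀ a' : Fin 2, ∑ j' : Fin k₂,
            (Matrix.blockDiagonal fun j0 => Qblock (cs j0)) (a', j') (a, j) • b (Sum.inr (a', j'))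
            = Qblock (cs j) a' a • b (Sum.inr (a', j)) := by
          intro a'
          rw [Finset.sum_eq_single j]
          · simp [Matrix.blockDiagonal_apply]
          · intro j' _ hne
            simp [Matrix.blockDiagonal_apply, hne]
          · intro h; exact absurd (Finset.mem_univ j) h
        rw [Finset.sum_congr rfl (fun a' _ => this a')]
        exact h7 a j
    rw [Matrix.mul_assoc]
    ext a bb
    rw [Matrix.mul_apply]
    have hcol : ∀ x, (Q * U) x bb = Matrix.toEuclideanLin Q (b (e.symm bb)) x := by
      intro x
      rw [Matrix.mul_apply]
      rfl
    calc ∑ x, Uᵀ a x * (Q * U) x bb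
        = ∑ x, b (e.symm a) x * Matrix.toEuclideanLin Q (b (e.symm bb)) x := by
          apply Finset.sum_congr rfl
          intro x _
          rw [Matrix.transpose_apply, hUapp, hcol]
      _ = (inner ℝ (b (e.symm a)) (Matrix.toEuclideanLin Q (b (e.symm bb))) : ℝ) :=
          (hinner _ _).symm
      _ = (Matrix.fromBlocks (Matrix.diagonal q') 0 0
            (Matrix.blockDiagonal fun j => Qblock (cs j))) (e.symm a) (e.symm bb) := by
          rw [hrep, inner_sum]
          simp only [real_inner_smul_right, horm]
          rw [Finset.sum_congr rfl (fun i' _ => by rw [mul_ite, mul_one, mul_zero])]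
          rw [Finset.sum_ite_eq Finset.univ (e.symm a)]
          simp
      _ = (Matrix.reindex e e (Matrix.fromBlocks (Matrix.diagonal q') 0 0
            (Matrix.blockDiagonal fun j => Qblock (cs j)))) a bb := by
          rw [Matrix.reindex_apply, Matrix.submatrix_apply]
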